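/- For every n = k² and m ≤ n, every (m, k, n)-Sudoku rectangle can be extended to an m×n Sudoku rectangle. -/

import Mathlib

/-- `S` (restricted to rows and columns below k²) is a Sudoku square of order
n = k²: entries in {1,…,k²}, and each symbol occurs at most once (hence, the
square being full, exactly once) in each row, each column, and each aligned
k×k block. -/
def IsSudokuSquare (k : ℕ) (S : ℕ → ℕ → ℕ) : Prop :=
  (∀ i < k ^ 2, ∀ j < k ^ 2, S i j ∈ Finset.Icc 1 (k ^ 2)) ∧
  (∀ i < k ^ 2, ∀ j₁ < k ^ 2, ∀ j₂ < k ^ 2, S i j₁ = S i j₂ → j₁ = j₂) ∧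
  (∀ j < k ^ 2, ∀ i₁ < k ^ 2, ∀ i₂ < k ^ 2, S i₁ j = S i₂ j → i₁ = i₂) ∧
  (∀ bi < k, ∀ bj < k, ∀ x₁ < k, ∀ y₁ < k, ∀ x₂ < k, ∀ y₂ < k,
    S (bi * k + x₁) (bj * k + y₁) = S (bi * k + x₂) (bj * k + y₂) → x₁ = x₂ ∧ y₁ = y₂)

/-- `R` (restricted to its first m rows, all columns below k²) is an m×n
Sudoku rectangle for n = k²: the first m rows are filled with entries from
{1,…,k²} satisfying the row, column and block conditions. -/
def IsSudokuRect (k m : ℕ) (R : ℕ → ℕ → ℕ) : Prop :=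
  (∀ i < m, ∀ j < k ^ 2, R i j ∈ Finset.Icc 1 (k ^ 2)) ∧
  (∀ i < m, ∀ j₁ < k ^ 2, ∀ j₂ < k ^ 2, R i j₁ = R i j₂ → j₁ = j₂) ∧
  (∀ j < k ^ 2, ∀ i₁ < m, ∀ i₂ < m, R i₁ j = R i₂ j → i₁ = i₂) ∧
  (∀ bi, ∀ bj < k, ∀ x₁ < k, ∀ y₁ < k, ∀ x₂ < k, ∀ y₂ < k,
    bi * k + x₁ < m → bi * k + x₂ < m →
    R (bi * k + x₁) (bj * k + y₁) = R (bi * k + x₂) (bj * k + y₂) → x₁ = x₂ ∧ y₁ = y₂)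

/-- The Sudoku square `S` is a completion of the m×n Sudoku rectangle `R`. -/
def CompletesTo (k m : ℕ) (R S : ℕ → ℕ → ℕ) : Prop :=
  IsSudokuSquare k S ∧ ∀ i < m, ∀ j < k ^ 2, S i j = R i j

/-- `R` (restricted to its first m rows and first k columns) is an
(m, k, k²)-Sudoku rectangle: these cells are filled with entries from
{1,…,k²} satisfying the row, column and block conditions. -/
def IsSudokuSubRect (k m : ℕ) (R : ℕ → ℕ → ℕ) : Prop :=
  (∀ i < m, ∀ j < k, R i j ∈ Finset.Icc 1 (k ^ 2)) ∧
  (∀ i < m, ∀ j₁ < k, ∀ j₂ < k, R i j₁ = R i j₂ → j₁ = j₂) ∧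
  (∀ j < k, ∀ i₁ < m, ∀ i₂ < m, R i₁ j = R i₂ j → i₁ = i₂) ∧
  (∀ bi, ∀ x₁ < k, ∀ y₁ < k, ∀ x₂ < k, ∀ y₂ < k,
    bi * k + x₁ < m → bi * k + x₂ < m →
    R (bi * k + x₁) y₁ = R (bi * k + x₂) y₂ → x₁ = x₂ ∧ y₁ = y₂)


section SudokuExtensionAux

open Finset

/-- Partition-extension: a family of `r ≤ t` pairwise disjoint `k`-subsets of a set `S`
of size `t*k` extends to a partition of `S` into `t` classes of size `k`. -/
lemma exists_class_fun (k : ℕ) : ∀ (t : ℕ) (S : Finset ℕ), S.card = t * k →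
    ∀ (r : ℕ), r ≤ t → ∀ (G : ℕ → Finset ℕ),
    (∀ c < r, G c ⊆ S) → (∀ c < r, (G c).card = k) →
    (∀ c₁, c₁ < r → ∀ c₂, c₂ < r → c₁ ≠ c₂ → Disjoint (G c₁) (G c₂)) →
    ∃ C : ℕ → ℕ, (∀ s ∈ S, C s < t) ∧ (∀ c < t, (S.filter (fun s => C s = c)).card = k)
      ∧ (∀ c < r, ∀ s ∈ G c, C s = c) := by
  intro t
  induction t with
  | zero =>
    intro S hS r hr G _ _ _
    refine ⟨fun _ => 0, ?_, ?_, ?_⟩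
    · intro s hs
      have : S = ∅ := Finset.card_eq_zero.mp (by simpa using hS)
      simp [this] at hs
    · intro c hc; omega
    · intro c hc; omega
  | succ t ih =>
    intro S hS r hr G hGsub hGcard hGdisj
    -- choose the set `T` for class `t`
    have hT : ∃ T : Finset ℕ, T ⊆ S ∧ T.card = k ∧ (∀ c < min r t, Disjoint (G c) T) ∧
        (r = t + 1 → T = G t) := by
      by_cases hrt : r = t + 1
      · refine ⟨G t, hGsub t (by omega), hGcard t (by omega), ?_, fun _ => rfl⟩
        intro c hc
        exact hGdisj c (by omega) t (by omega) (by omega)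
      · -- r ≤ t
        have hrle : r ≤ t := by omega
        set U := S \ (Finset.range r).biUnion G with hU
        have hbig : (Finset.range r).biUnion G ⊆ S := by
          intro a ha
          rcases Finset.mem_biUnion.mp ha with ⟨c, hc, hac⟩
          exact hGsub c (Finset.mem_range.mp hc) hac
        have hcardB : ((Finset.range r).biUnion G).card = r * k := by
          rw [Finset.card_biUnion]
          · rw [Finset.sum_congr rfl (fun c hc => hGcard c (Finset.mem_range.mp hc))]
            simp [Finset.sum_const, Finset.card_range, mul_comm]
          · intro c₁ h1 c₂ h2 hne
            exact hGdisj c₁ (Finset.mem_range.mp h1) c₂ (Finset.mem_range.mp h2) hne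
        have hUcard : U.card = (t + 1) * k - r * k := by
          rw [hU, Finset.card_sdiff_of_subset hbig, hS, hcardB]
        have hk : k ≤ U.card := by
          rw [hUcard]
          have : r * k + k ≤ (t+1) * k := by nlinarith
          omega
        obtain ⟨T, hTU, hTcard⟩ := Finset.exists_subset_card_eq (s := U) hk
        refine ⟨T, hTU.trans (Finset.sdiff_subset), hTcard, ?_, fun h => absurd h hrt⟩
        intro c hc
        have : Disjoint (G c) U := by
          apply Finset.disjoint_right.mpr
          intro a haU haG
          have := (Finset.mem_sdiff.mp haU).2
          exact this (Finset.mem_biUnion.mpr ⟨c, Finset.mem_range.mpr (by omega), haG⟩)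
        exact this.mono_right hTU
    obtain ⟨T, hTS, hTcard, hTdisj, hTr⟩ := hT
    set S' := S \ T with hS'
    have hS'card : S'.card = t * k := by
      rw [hS', Finset.card_sdiff_of_subset hTS, hS, hTcard]
      ring_nf
      omega
    have hG'sub : ∀ c < min r t, G c ⊆ S' := by
      intro c hc a ha
      rw [hS', Finset.mem_sdiff]
      exact ⟨hGsub c (by omega) ha, fun haT => Finset.disjoint_left.mp (hTdisj c hc) ha haT⟩
    obtain ⟨C', hC'lt, hC'card, hC'G⟩ := ih S' hS'card (min r t) (by omega) G hG'sub
      (fun c hc => hGcard c (by omega)) (fun c₁ h1 c₂ h2 hne => hGdisj c₁ (by omega) c₂ (by omega) hne)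
    classical
    refine ⟨fun s => if s ∈ T then t else C' s, ?_, ?_, ?_⟩
    · intro s hs
      by_cases h : s ∈ T
      · simp [h]
      · have hs' : s ∈ S' := Finset.mem_sdiff.mpr ⟨hs, h⟩
        have := hC'lt s hs'
        simp only []
        rw [if_neg h]
        omega
    · intro c hc
      rcases Nat.lt_succ_iff_lt_or_eq.mp hc with hlt | heq
      · have : S.filter (fun s => (if s ∈ T then t else C' s) = c) =
            S'.filter (fun s => C' s = c) := by
          ext a
          simp only [Finset.mem_filter, hS', Finset.mem_sdiff]
          constructor
          · rintro ⟨haS, hval⟩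
            by_cases h : a ∈ T
            · simp [h] at hval; omega
            · simp [h] at hval; exact ⟨⟨haS, h⟩, hval⟩
          · rintro ⟨⟨haS, haT⟩, hval⟩
            refine ⟨haS, ?_⟩; simp [haT, hval]
        rw [this]; exact hC'card c hlt
      · subst heq
        have : S.filter (fun s => (if s ∈ T then c else C' s) = c) = T := by
          ext a
          simp only [Finset.mem_filter]
          constructor
          · rintro ⟨haS, hval⟩
            by_cases h : a ∈ T
            · exact h
            · exfalso
              simp [h] at hval
              have : a ∈ S' := Finset.mem_sdiff.mpr ⟨haS, h⟩
              have := hC'lt a this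
              omega
          · intro haT
            exact ⟨hTS haT, by simp [haT]⟩
        rw [this]; exact hTcard
    · intro c hc s hsG
      by_cases hct : c = t
      · subst hct
        have hrt : r = c + 1 := by omega
        have hTG : T = G c := hTr hrt
        have : s ∈ T := hTG ▸ hsG
        simp [this]
      · have hcmin : c < min r t := by omega
        have hsT : s ∉ T := fun hsT => Finset.disjoint_left.mp (hTdisj c hcmin) hsG hsT
        simp [hsT]
        exact hC'G c hcmin s hsG


/-- Counting helper: the Fin-indexed filter has the same cardinality as the range filter. -/
lemma card_filter_fin (N : ℕ) (P : ℕ → Prop) [DecidablePred P] :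
    ((Finset.univ : Finset (Fin N)).filter (fun i => P i.val)).card
      = ((Finset.range N).filter P).card := by
  rw [Finset.card_filter, Finset.card_filter, Fin.sum_univ_eq_sum_range (fun i => if P i then 1 else 0)]

/-- 1-factorization of an `r`-regular bipartite graph, as iterated Hall matchings. -/
lemma exists_factorization (N : ℕ) (S : Finset ℕ) (hS : S.card = N) :
    ∀ (r : ℕ) (A : ℕ → Finset ℕ), (∀ i < N, A i ⊆ S) → (∀ i < N, (A i).card = r) →
    (∀ a ∈ S, ((Finset.range N).filter (fun i => a ∈ A i)).card = r) →
    ∃ F : ℕ → ℕ → ℕ, (∀ i < N, ∀ c < r, F i c ∈ A i) ∧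
      (∀ c < r, ∀ i₁ < N, ∀ i₂ < N, F i₁ c = F i₂ c → i₁ = i₂) ∧
      (∀ i < N, ∀ c₁ < r, ∀ c₂ < r, F i c₁ = F i c₂ → c₁ = c₂) := by
  intro r
  induction r with
  | zero =>
    intro A _ _ _
    exact ⟨fun _ _ => 0, by omega, by omega, by omega⟩
  | succ r ih =>
    intro A hAsub hAcard hAdeg
    classical
    -- Hall's condition
    have hall : ∀ s : Finset (Fin N), s.card ≤ (s.biUnion (fun i => A i.val)).card := by
      intro s
      set B := s.biUnion (fun i => A i.val) with hB
      have key : (r + 1) * s.card ≤ (r + 1) * B.card := by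
        have h1 : ∑ i ∈ s, (A i.val).card = (r+1) * s.card := by
          rw [Finset.sum_congr rfl (fun i _ => hAcard i.val i.isLt)]
          simp [mul_comm]
        have h2 : ∀ i ∈ s, (A i.val).card = ∑ a ∈ B, (if a ∈ A i.val then 1 else 0) := by
          intro i hi
          rw [← Finset.card_filter]
          congr 1
          apply Finset.Subset.antisymm
          · intro a ha
            exact Finset.mem_filter.mpr ⟨Finset.mem_biUnion.mpr ⟨i, hi, ha⟩, ha⟩
          · intro a ha
            exact (Finset.mem_filter.mp ha).2
        have h3 : ∑ i ∈ s, (A i.val).card = ∑ a ∈ B, (s.filter (fun i => a ∈ A i.val)).card := by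
          rw [Finset.sum_congr rfl h2, Finset.sum_comm]
          exact Finset.sum_congr rfl (fun a _ => (Finset.card_filter _ _).symm)
        have h4 : ∀ a ∈ B, (s.filter (fun i => a ∈ A i.val)).card ≤ r + 1 := by
          intro a ha
          have haS : a ∈ S := by
            rcases Finset.mem_biUnion.mp ha with ⟨i, _, hai⟩
            exact hAsub i.val i.isLt hai
          calc (s.filter (fun i => a ∈ A i.val)).card
              ≤ ((Finset.univ : Finset (Fin N)).filter (fun i => a ∈ A i.val)).card :=
                Finset.card_le_card (Finset.filter_subset_filter _ (Finset.subset_univ s))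
            _ = ((Finset.range N).filter (fun i => a ∈ A i)).card := card_filter_fin N (fun i => a ∈ A i)
            _ = r + 1 := hAdeg a haS
        calc (r+1) * s.card = ∑ a ∈ B, (s.filter (fun i => a ∈ A i.val)).card := by
              rw [← h1, h3]
          _ ≤ ∑ _a ∈ B, (r+1) := Finset.sum_le_sum h4
          _ = (r+1) * B.card := by simp [mul_comm]
      exact Nat.le_of_mul_le_mul_left key (Nat.succ_pos r)
    obtain ⟨f, hfinj, hfmem⟩ :=
      (Finset.all_card_le_biUnion_card_iff_exists_injective (fun i : Fin N => A i.val)).mp hall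
    -- f is surjective onto S
    have himg : (Finset.univ : Finset (Fin N)).image f = S := by
      apply Finset.eq_of_subset_of_card_le
      · intro a ha
        rcases Finset.mem_image.mp ha with ⟨i, _, rfl⟩
        exact hAsub i.val i.isLt (hfmem i)
      · rw [Finset.card_image_of_injective _ hfinj, Finset.card_univ, Fintype.card_fin, hS]
    set f' : ℕ → ℕ := fun i => if h : i < N then f ⟨i, h⟩ else 0 with hf'
    have hf'mem : ∀ i < N, f' i ∈ A i := by
      intro i hi; simp only [hf', dif_pos hi]; exact hfmem ⟨i, hi⟩
    have hf'inj : ∀ i₁ < N, ∀ i₂ < N, f' i₁ = f' i₂ → i₁ = i₂ := by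
      intro i₁ h1 i₂ h2 he
      simp only [hf', dif_pos h1, dif_pos h2] at he
      have := hfinj he
      exact congrArg Fin.val this
    set A' : ℕ → Finset ℕ := fun i => (A i).erase (f' i) with hA'
    have hA'sub : ∀ i < N, A' i ⊆ S := fun i hi =>
      (Finset.erase_subset _ _).trans (hAsub i hi)
    have hA'card : ∀ i < N, (A' i).card = r := by
      intro i hi
      rw [hA']
      rw [Finset.card_erase_of_mem (hf'mem i hi), hAcard i hi]
      omega
    have hA'deg : ∀ a ∈ S, ((Finset.range N).filter (fun i => a ∈ A' i)).card = r := by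
      intro a haS
      obtain ⟨ia, _, hia⟩ := Finset.mem_image.mp (himg ▸ haS)
      have hiaN : (ia : ℕ) < N := ia.isLt
      have hf'ia : f' ia.val = a := by simp only [hf', dif_pos hiaN, Fin.eta]; exact hia
      have hmem : (ia : ℕ) ∈ (Finset.range N).filter (fun i => a ∈ A i) := by
        refine Finset.mem_filter.mpr ⟨Finset.mem_range.mpr hiaN, ?_⟩
        rw [← hf'ia]; exact hf'mem ia.val hiaN
      have heq : (Finset.range N).filter (fun i => a ∈ A' i)
          = ((Finset.range N).filter (fun i => a ∈ A i)).erase ia.val := by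
        ext j
        simp only [Finset.mem_filter, Finset.mem_erase, Finset.mem_range, hA',
          Finset.mem_erase]
        constructor
        · rintro ⟨hj, hne, hjA⟩
          refine ⟨fun hji => hne ?_, hj, hjA⟩
          rw [hji, hf'ia]
        · rintro ⟨hne, hj, hjA⟩
          refine ⟨hj, fun hfa => hne ?_, hjA⟩
          exact hf'inj j hj ia.val hiaN (by rw [← hfa, hf'ia])
      rw [heq, Finset.card_erase_of_mem hmem, hAdeg a haS]
      omega
    obtain ⟨F', hF'mem, hF'colinj, hF'rowinj⟩ := ih A' hA'sub hA'card hA'deg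
    refine ⟨fun i c => if c = r then f' i else F' i c, ?_, ?_, ?_⟩
    · intro i hi c hc
      by_cases h : c = r
      · simpa [h] using hf'mem i hi
      · have : F' i c ∈ A' i := hF'mem i hi c (by omega)
        simpa [h] using Finset.mem_of_mem_erase this
    · intro c hc i₁ h1 i₂ h2 he
      by_cases h : c = r
      · simp only [h, if_pos] at he
        exact hf'inj i₁ h1 i₂ h2 he
      · simp only [h, if_neg, ite_false] at he
        exact hF'colinj c (by omega) i₁ h1 i₂ h2 he
    · intro i hi c₁ hc1 c₂ hc2 he
      by_cases h1' : c₁ = r <;> by_cases h2' : c₂ = r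
      · omega
      · exfalso
        simp only [h1', h2', if_pos, if_neg, ite_true, ite_false] at he
        have : F' i c₂ ∈ A' i := hF'mem i hi c₂ (by omega)
        rw [hA'] at this
        exact (Finset.ne_of_mem_erase this) he.symm
      · exfalso
        simp only [h1', h2', if_neg, if_pos, ite_true, ite_false] at he
        have : F' i c₁ ∈ A' i := hF'mem i hi c₁ (by omega)
        rw [hA'] at this
        exact (Finset.ne_of_mem_erase this) he
      · simp only [h1', h2', ite_false] at he
        exact hF'rowinj i hi c₁ (by omega) c₂ (by omega) he


/-- cancellation of addition mod k for small summands -/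
lemma mod_add_inj (k c b₁ b₂ : ℕ) (h₁ : b₁ < k) (h₂ : b₂ < k)
    (he : (c + b₁) % k = (c + b₂) % k) : b₁ = b₂ := by
  have h : b₁ ≡ b₂ [MOD k] := Nat.ModEq.add_left_cancel' c he
  have h' : b₁ % k = b₂ % k := h
  rwa [Nat.mod_eq_of_lt h₁, Nat.mod_eq_of_lt h₂] at h'

lemma mod_shift_iff (k bj x : ℕ) (hk : 0 < k) (hbj : bj < k) (hx : x < k) :
    ∀ c < k, ((c + bj) % k = x ↔ c = (x + (k - bj)) % k) := by
  intro c hc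
  constructor
  · intro h
    have : (x + (k - bj)) % k = ((c + bj) % k + (k - bj)) % k := by rw [h]
    rw [this, Nat.mod_add_mod]
    have he : c + bj + (k - bj) = c + k := by omega
    rw [he, Nat.add_mod_right, Nat.mod_eq_of_lt hc]
  · intro h
    rw [h, Nat.mod_add_mod]
    have he : x + (k - bj) + bj = x + k := by omega
    rw [he, Nat.add_mod_right, Nat.mod_eq_of_lt hx]

lemma div_mod_decomp (k b w : ℕ) (hk : 0 < k) (hw : w < k) :
    (b * k + w) / k = b ∧ (b * k + w) % k = w := by
  constructor
  · rw [mul_comm, Nat.mul_add_div hk, Nat.div_eq_of_lt hw, Nat.add_zero]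
  · rw [mul_comm, Nat.mul_add_mod, Nat.mod_eq_of_lt hw]


end SudokuExtensionAux

/-- Every (m, k, k²)-Sudoku rectangle can be extended to an m×k² Sudoku
rectangle (keeping the originally filled cells unchanged). -/
theorem sudoku_subrect_extension (k m : ℕ) (hm : m ≤ k ^ 2)
    (R : ℕ → ℕ → ℕ) (hR : IsSudokuSubRect k m R) :
    ∃ R' : ℕ → ℕ → ℕ, IsSudokuRect k m R' ∧ ∀ i < m, ∀ j < k, R' i j = R i j := by
  classical
  rcases Nat.eq_zero_or_pos k with hk0 | hk
  · subst hk0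
    have hm0 : m = 0 := by simpa using hm
    subst hm0
    exact ⟨R, ⟨by omega, by omega, by simp, by omega⟩, by omega⟩
  obtain ⟨hmem, hrow, hcol, hblk⟩ := hR
  set S : Finset ℕ := Finset.Icc 1 (k ^ 2) with hSdef
  have hScard : S.card = k * k := by
    rw [hSdef, Nat.card_Icc]
    rw [pow_two]
    omega
  have hkk : k ^ 2 = k * k := pow_two k
  -- entries of the subrectangle are in S
  -- Step 1: class functions per band
  have hC : ∀ b : ℕ, ∃ C : ℕ → ℕ, (∀ s ∈ S, C s < k) ∧
      (∀ c < k, (S.filter (fun s => C s = c)).card = k) ∧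
      (∀ i < m, i / k = b → ∀ y < k, C (R i y) = i % k) := by
    intro b
    set r : ℕ := min k (m - b * k) with hrdef
    set G : ℕ → Finset ℕ := fun c => (Finset.range k).image (fun y => R (b * k + c) y) with hGdef
    have hrowlt : ∀ c < r, b * k + c < m := by intro c hc; omega
    have hGsub : ∀ c < r, G c ⊆ S := by
      intro c hc a ha
      rcases Finset.mem_image.mp ha with ⟨y, hy, rfl⟩
      exact hmem (b * k + c) (hrowlt c hc) y (Finset.mem_range.mp hy)
    have hGcard : ∀ c < r, (G c).card = k := by
      intro c hc
      rw [hGdef]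
      rw [Finset.card_image_of_injOn, Finset.card_range]
      intro y₁ h₁ y₂ h₂ he
      exact hrow (b * k + c) (hrowlt c hc) y₁ (Finset.mem_range.mp (Finset.mem_coe.mp h₁))
        y₂ (Finset.mem_range.mp (Finset.mem_coe.mp h₂)) he
    have hGdisj : ∀ c₁, c₁ < r → ∀ c₂, c₂ < r → c₁ ≠ c₂ → Disjoint (G c₁) (G c₂) := by
      intro c₁ h₁ c₂ h₂ hne
      rw [Finset.disjoint_left]
      intro a ha₁ ha₂
      rcases Finset.mem_image.mp ha₁ with ⟨y₁, hy₁, he₁⟩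
      rcases Finset.mem_image.mp ha₂ with ⟨y₂, hy₂, he₂⟩
      have := hblk b c₁ (by omega) y₁ (Finset.mem_range.mp hy₁) c₂ (by omega)
        y₂ (Finset.mem_range.mp hy₂) (hrowlt c₁ h₁) (hrowlt c₂ h₂) (by rw [he₁, he₂])
      exact hne this.1
    obtain ⟨C, hC1, hC2, hC3⟩ := exists_class_fun k k S hScard r (by omega) G hGsub hGcard hGdisj
    refine ⟨C, hC1, hC2, ?_⟩
    intro i hi hib y hy
    have hdm := Nat.div_add_mod i k
    rw [hib] at hdm
    have hbk : b * k = k * b := Nat.mul_comm b k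
    have hc : i % k < r := by
      have h1 : i % k < k := Nat.mod_lt _ hk
      rw [hrdef]
      omega
    have hmemG : R i y ∈ G (i % k) := by
      rw [hGdef]
      refine Finset.mem_image.mpr ⟨y, Finset.mem_range.mpr hy, ?_⟩
      congr 1
      omega
    exact hC3 (i % k) hc _ hmemG

  choose Cf hC1 hC2 hC3 using hC
  have hP3 : ∀ i < m, ∀ y < k, Cf (i / k) (R i y) = i % k :=
    fun i hi y hy => hC3 (i / k) i hi rfl y hy
  -- Step 2: columns from 1-factorizations
  have hF : ∀ bj : ℕ, ∃ F : ℕ → ℕ → ℕ, 1 ≤ bj → bj < k →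
      (∀ i < k * k, ∀ c < k, F i c ∈ S ∧ (Cf (i / k) (F i c) + bj) % k = i % k) ∧
      (∀ c < k, ∀ i₁ < k * k, ∀ i₂ < k * k, F i₁ c = F i₂ c → i₁ = i₂) ∧
      (∀ i < k * k, ∀ c₁ < k, ∀ c₂ < k, F i c₁ = F i c₂ → c₁ = c₂) := by
    intro bj
    by_cases hbj : 1 ≤ bj ∧ bj < k
    · obtain ⟨hbj1, hbjk⟩ := hbj
      set A : ℕ → Finset ℕ := fun i => S.filter (fun s => (Cf (i / k) s + bj) % k = i % k)
        with hAdef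
      have hAsub : ∀ i < k * k, A i ⊆ S := fun i _ => Finset.filter_subset _ _
      have hAcard : ∀ i < k * k, (A i).card = k := by
        intro i hi
        have hb : i / k < k := (Nat.div_lt_iff_lt_mul hk).mpr hi
        have hx : i % k < k := Nat.mod_lt _ hk
        have heqA : A i = S.filter (fun s => Cf (i / k) s = (i % k + (k - bj)) % k) := by
          rw [hAdef]
          apply Finset.filter_congr
          intro s hs
          exact mod_shift_iff k bj (i % k) hk hbjk hx _ (hC1 (i / k) s hs)
        rw [heqA]
        exact hC2 (i / k) _ (Nat.mod_lt _ hk)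
      have hAdeg : ∀ a ∈ S, ((Finset.range (k * k)).filter (fun i => a ∈ A i)).card = k := by
        intro a ha
        have himg : (Finset.range (k * k)).filter (fun i => a ∈ A i)
            = (Finset.range k).image (fun b => b * k + (Cf b a + bj) % k) := by
          ext i
          simp only [Finset.mem_filter, Finset.mem_range, Finset.mem_image, hAdef]
          constructor
          · rintro ⟨hi, hiA⟩
            have hiA' := hiA.2
            refine ⟨i / k, (Nat.div_lt_iff_lt_mul hk).mpr hi, ?_⟩
            rw [hiA']
            have hdm := Nat.div_add_mod i k
            have hco : i / k * k = k * (i / k) := Nat.mul_comm _ _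
            omega
          · rintro ⟨b, hb, rfl⟩
            have hwk : (Cf b a + bj) % k < k := Nat.mod_lt _ hk
            obtain ⟨hdiv, hmod⟩ := div_mod_decomp k b ((Cf b a + bj) % k) hk hwk
            refine ⟨by nlinarith, ?_⟩
            refine ⟨ha, ?_⟩
            rw [hdiv, hmod]
        rw [himg, Finset.card_image_of_injOn, Finset.card_range]
        intro b₁ h₁ b₂ h₂ he
        have hw₁ : (Cf b₁ a + bj) % k < k := Nat.mod_lt _ hk
        have hw₂ : (Cf b₂ a + bj) % k < k := Nat.mod_lt _ hk
        have e₁ := (div_mod_decomp k b₁ _ hk hw₁).1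
        have e₂ := (div_mod_decomp k b₂ _ hk hw₂).1
        simp only at he
        rw [← e₁, ← e₂, he]
      obtain ⟨F, h1, h2, h3⟩ := exists_factorization (k * k) S hScard k A hAsub hAcard hAdeg
      refine ⟨F, fun _ _ => ⟨?_, h2, h3⟩⟩
      intro i hi c hc
      have hmemA := h1 i hi c hc
      rw [hAdef] at hmemA
      exact ⟨(Finset.mem_filter.mp hmemA).1, (Finset.mem_filter.mp hmemA).2⟩
    · exact ⟨fun _ _ => 0, fun h1 h2 => absurd ⟨h1, h2⟩ hbj⟩
  choose Ff hFf using hF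
  -- the completed rectangle
  set R' : ℕ → ℕ → ℕ := fun i j => if j < k then R i j else
      if i < k * k ∧ j < k * k then Ff (j / k) i (j % k) else 0 with hR'def
  have hmlekk : m ≤ k * k := by rw [← hkk]; exact hm
  have hcolfact : ∀ j, ¬ j < k → j < k * k → 1 ≤ j / k ∧ j / k < k ∧ j % k < k := by
    intro j h1 h2
    exact ⟨(Nat.one_le_div_iff hk).mpr (by omega), (Nat.div_lt_iff_lt_mul hk).mpr h2,
      Nat.mod_lt _ hk⟩
  have hR'val : ∀ i j, ¬ j < k → i < k * k → j < k * k → R' i j = Ff (j / k) i (j % k) := by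
    intro i j h1 h2 h3
    rw [hR'def]
    simp only [if_neg h1, if_pos (And.intro h2 h3)]
  have hR'val2 : ∀ i j, j < k → R' i j = R i j := by
    intro i j h1
    rw [hR'def]
    simp only [if_pos h1]
  refine ⟨R', ⟨?_, ?_, ?_, ?_⟩, ?_⟩
  · -- membership
    intro i hi j hj
    rw [hkk] at hj
    by_cases hjk : j < k
    · rw [hR'val2 i j hjk]
      exact hmem i hi j hjk
    · rw [hR'val i j hjk (by omega) hj]
      obtain ⟨hb1, hb2, hb3⟩ := hcolfact j hjk hj
      exact ((hFf (j / k) hb1 hb2).1 i (by omega) (j % k) hb3).1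
  · -- row injectivity
    intro i hi j₁ hj₁ j₂ hj₂ he
    rw [hkk] at hj₁ hj₂
    have hik : i < k * k := by omega
    have himod : i % k < k := Nat.mod_lt _ hk
    by_cases h₁ : j₁ < k <;> by_cases h₂ : j₂ < k
    · rw [hR'val2 i j₁ h₁, hR'val2 i j₂ h₂] at he
      exact hrow i hi j₁ h₁ j₂ h₂ he
    · exfalso
      rw [hR'val2 i j₁ h₁, hR'val i j₂ h₂ hik hj₂] at he
      obtain ⟨hb1, hb2, hb3⟩ := hcolfact j₂ h₂ hj₂
      have hclass := ((hFf (j₂ / k) hb1 hb2).1 i hik (j₂ % k) hb3).2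
      rw [← he] at hclass
      rw [hP3 i hi j₁ h₁] at hclass
      have : j₂ / k = 0 := by
        apply mod_add_inj k (i % k) _ 0 hb2 hk
        rw [Nat.add_zero, Nat.mod_eq_of_lt himod]
        exact hclass
      omega
    · exfalso
      rw [hR'val2 i j₂ h₂, hR'val i j₁ h₁ hik hj₁] at he
      obtain ⟨hb1, hb2, hb3⟩ := hcolfact j₁ h₁ hj₁
      have hclass := ((hFf (j₁ / k) hb1 hb2).1 i hik (j₁ % k) hb3).2
      rw [he] at hclass
      rw [hP3 i hi j₂ h₂] at hclass
      have : j₁ / k = 0 := by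
        apply mod_add_inj k (i % k) _ 0 hb2 hk
        rw [Nat.add_zero, Nat.mod_eq_of_lt himod]
        exact hclass
      omega
    · rw [hR'val i j₁ h₁ hik hj₁, hR'val i j₂ h₂ hik hj₂] at he
      obtain ⟨ha1, ha2, ha3⟩ := hcolfact j₁ h₁ hj₁
      obtain ⟨hb1, hb2, hb3⟩ := hcolfact j₂ h₂ hj₂
      have hclass₁ := ((hFf (j₁ / k) ha1 ha2).1 i hik (j₁ % k) ha3).2
      have hclass₂ := ((hFf (j₂ / k) hb1 hb2).1 i hik (j₂ % k) hb3).2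
      rw [he] at hclass₁
      have hdiveq : j₁ / k = j₂ / k := by
        apply mod_add_inj k (Cf (i / k) (Ff (j₂ / k) i (j₂ % k))) _ _ ha2 hb2
        rw [hclass₁, hclass₂]
      rw [hdiveq] at he
      have hmodeq : j₁ % k = j₂ % k :=
        (hFf (j₂ / k) hb1 hb2).2.2 i hik (j₁ % k) ha3 (j₂ % k) hb3 he
      have d₁ := Nat.div_add_mod j₁ k
      have d₂ := Nat.div_add_mod j₂ k
      rw [hdiveq, hmodeq] at d₁
      omega
  · -- column injectivity
    intro j hj i₁ hi₁ i₂ hi₂ he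
    rw [hkk] at hj
    by_cases hjk : j < k
    · rw [hR'val2 i₁ j hjk, hR'val2 i₂ j hjk] at he
      exact hcol j hjk i₁ hi₁ i₂ hi₂ he
    · rw [hR'val i₁ j hjk (by omega) hj, hR'val i₂ j hjk (by omega) hj] at he
      obtain ⟨hb1, hb2, hb3⟩ := hcolfact j hjk hj
      exact (hFf (j / k) hb1 hb2).2.1 (j % k) hb3 i₁ (by omega) i₂ (by omega) he
  · -- block condition
    intro bi bj hbj x₁ hx₁ y₁ hy₁ x₂ hx₂ y₂ hy₂ hr₁ hr₂ he
    obtain ⟨hdiv₁, hmod₁⟩ := div_mod_decomp k bi x₁ hk hx₁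
    obtain ⟨hdiv₂, hmod₂⟩ := div_mod_decomp k bi x₂ hk hx₂
    have hik₁ : bi * k + x₁ < k * k := by omega
    have hik₂ : bi * k + x₂ < k * k := by omega
    by_cases hbj0 : bj = 0
    · subst hbj0
      rw [zero_mul, zero_add, zero_add] at he
      rw [hR'val2 _ y₁ hy₁, hR'val2 _ y₂ hy₂] at he
      exact hblk bi x₁ hx₁ y₁ hy₁ x₂ hx₂ y₂ hy₂ hr₁ hr₂ he
    · obtain ⟨hcdiv₁, hcmod₁⟩ := div_mod_decomp k bj y₁ hk hy₁
      obtain ⟨hcdiv₂, hcmod₂⟩ := div_mod_decomp k bj y₂ hk hy₂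
      have hstep : bj * k + k ≤ k * k := by
        have h := mul_le_mul_left (show bj + 1 ≤ k by omega) k
        rwa [Nat.succ_mul] at h
      have hlow : 1 * k ≤ bj * k := mul_le_mul_left (by omega) k
      rw [one_mul] at hlow
      have hjk₁ : ¬ bj * k + y₁ < k := by omega
      have hjk₂ : ¬ bj * k + y₂ < k := by omega
      have hjkk₁ : bj * k + y₁ < k * k := by omega
      have hjkk₂ : bj * k + y₂ < k * k := by omega
      rw [hR'val _ _ hjk₁ hik₁ hjkk₁, hR'val _ _ hjk₂ hik₂ hjkk₂] at he
      rw [hcdiv₁, hcmod₁, hcdiv₂, hcmod₂] at he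
      have hb1 : 1 ≤ bj := by omega
      have hclass₁ := ((hFf bj hb1 hbj).1 (bi * k + x₁) hik₁ y₁ hy₁).2
      have hclass₂ := ((hFf bj hb1 hbj).1 (bi * k + x₂) hik₂ y₂ hy₂).2
      rw [he] at hclass₁
      rw [hdiv₁, hmod₁] at hclass₁
      rw [hdiv₂, hmod₂] at hclass₂
      have hxeq : x₁ = x₂ := by
        rw [hclass₂] at hclass₁
        rw [← Nat.mod_eq_of_lt hx₁, ← Nat.mod_eq_of_lt hx₂]
        rw [hclass₁]
      subst hxeq
      have hyeq : y₁ = y₂ := (hFf bj hb1 hbj).2.2 (bi * k + x₁) hik₁ y₁ hy₁ y₂ hy₂ he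
      exact ⟨rfl, hyeq⟩
  · -- agreement
    intro i hi j hj
    exact hR'val2 i j hj
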